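/- Let V be a finite-dimensional vector space over F_p with basis B = {e_1,…,e_d}, and let α, β : V → F_p be maps of combinatorial degree at most n (i.e., their (n+1)-st derived forms vanish, equivalently their n-th derived forms are symmetric n-linear). If α_k and β_k agree on all k-tuples of basis vectors for every 1 ≤ k ≤ n (where α_1 = α), then α = β. -/

import Mathlib

/-- The `n`-th derived form of `α : V → F_p`:
`α_n(u_1,…,u_n) = Σ_{∅ ≠ {i_1,…,i_m} ⊆ {1,…,n}} (−1)^{n−m} α(u_{i_1}+⋯+u_{i_m})`,
the empty subset contributing `0` (the convention `α(∅) = 0`).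
Note `derivedForm α 1 u = α (u 0)`, i.e. `α_1 = α`. -/
def derivedForm {V : Type*} [AddCommGroup V] {p : ℕ} (α : V → ZMod p)
    (n : ℕ) (u : Fin n → V) : ZMod p :=
  ∑ s ∈ Finset.univ.powerset.filter (fun s : Finset (Fin n) => s ≠ ∅),
    (-1 : ZMod p) ^ (n - s.card) * α (∑ i ∈ s, u i)

namespace DFaux

variable {V : Type*} [AddCommGroup V] {p : ℕ} [Module (ZMod p) V]

/-- Full inclusion–exclusion sum, including the empty set (contributing `(-1)^n α 0`). -/
def F (α : V → ZMod p) (n : ℕ) (u : Fin n → V) : ZMod p :=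
  ∑ s ∈ (Finset.univ : Finset (Fin n)).powerset,
    (-1 : ZMod p) ^ (n - s.card) * α (∑ i ∈ s, u i)

omit [Module (ZMod p) V]

lemma derivedForm_eq_F (α : V → ZMod p) (n : ℕ) (u : Fin n → V) :
    derivedForm α n u = F α n u - (-1) ^ n * α 0 := by
  have hsplit := Finset.sum_filter_add_sum_filter_not
    (Finset.univ : Finset (Fin n)).powerset (fun s => s ≠ ∅)
    (fun s : Finset (Fin n) => (-1 : ZMod p) ^ (n - s.card) * α (∑ i ∈ s, u i))
  have h2 : (Finset.univ : Finset (Fin n)).powerset.filter (fun s => ¬ s ≠ ∅) = {∅} := by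
    ext s; simp
  rw [h2, Finset.sum_singleton] at hsplit
  simp only [Finset.card_empty, Nat.sub_zero, Finset.sum_empty] at hsplit
  rw [derivedForm, F.eq_1, ← hsplit]
  ring

lemma derivedForm_one (α : V → ZMod p) (u : Fin 1 → V) :
    derivedForm α 1 u = α (u 0) := by
  have h : (Finset.univ : Finset (Fin 1)).powerset.filter (fun s => s ≠ ∅) = {{0}} := by
    decide
  rw [derivedForm, h, Finset.sum_singleton]
  simp

lemma F_cons (α : V → ZMod p) (k : ℕ) (x : V) (u : Fin k → V) :
    F α (k+1) (Fin.cons x u) = F (fun z => α (x + z)) k u - F α k u := by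
  set emb : Fin k ↪ Fin (k+1) := ⟨Fin.succ, Fin.succ_injective k⟩ with hemb
  have huniv : (Finset.univ : Finset (Fin (k+1))) = insert 0 (Finset.univ.map emb) := by
    rw [Fin.univ_succ, Finset.cons_eq_insert]
  have h0 : (0 : Fin (k+1)) ∉ Finset.univ.map emb := by
    simp [hemb, eq_comm, Fin.succ_ne_zero]
  have himg : (Finset.univ.map emb).powerset
      = (Finset.univ : Finset (Fin k)).powerset.image (fun t => t.map emb) := by
    ext t
    simp only [Finset.mem_powerset, Finset.mem_image]
    constructor
    · intro ht
      refine ⟨t.preimage emb emb.injective.injOn, Finset.subset_univ _, ?_⟩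
      ext a
      simp only [Finset.mem_map, Finset.mem_preimage]
      constructor
      · rintro ⟨b, hb, rfl⟩; exact hb
      · intro ha
        obtain ⟨b, hb, rfl⟩ := Finset.mem_map.1 (ht ha)
        exact ⟨b, ha, rfl⟩
    · rintro ⟨s, -, rfl⟩
      exact Finset.map_subset_map.2 (Finset.subset_univ s)
  have hinj : ∀ s ∈ (Finset.univ : Finset (Fin k)).powerset,
      ∀ t ∈ (Finset.univ : Finset (Fin k)).powerset, s.map emb = t.map emb → s = t :=
    fun s _ t _ h => Finset.map_injective emb h
  rw [F.eq_1, huniv, Finset.sum_powerset_insert h0, himg,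
    Finset.sum_image hinj, Finset.sum_image hinj]
  rw [F.eq_1, F.eq_1, ← Finset.sum_sub_distrib, ← Finset.sum_add_distrib]
  refine Finset.sum_congr rfl fun t ht => ?_
  have htc : t.card ≤ k := by
    simpa using Finset.card_le_card (Finset.mem_powerset.1 ht)
  have h0t : (0 : Fin (k+1)) ∉ t.map emb := fun h =>
    h0 (Finset.map_subset_map.2 (Finset.subset_univ t) h)
  have hcard : (t.map emb).card = t.card := Finset.card_map emb
  have hsum : (∑ i ∈ t.map emb, Fin.cons x u i) = ∑ j ∈ t, u j := by
    rw [Finset.sum_map]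
    exact Finset.sum_congr rfl fun j _ => by simp [hemb]
  rw [Finset.sum_insert h0t, Finset.card_insert_of_notMem h0t, hcard, hsum]
  have hs1 : k + 1 - t.card = (k - t.card) + 1 := by omega
  have hs2 : k + 1 - (t.card + 1) = k - t.card := by omega
  rw [hs1, hs2]
  simp only [Fin.cons_zero, pow_succ]
  ring

lemma derivedForm_cons (α : V → ZMod p) (k : ℕ) (x : V) (u : Fin k → V) :
    derivedForm α (k+1) (Fin.cons x u)
      = derivedForm (fun z => α (x + z)) k u + (-1 : ZMod p)^k * α x
        - derivedForm α k u := by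
  rw [derivedForm_eq_F, F_cons, derivedForm_eq_F, derivedForm_eq_F]
  simp only [pow_succ, add_zero]
  ring

lemma derivedForm_sub (α β : V → ZMod p) (k : ℕ) (u : Fin k → V) :
    derivedForm (fun v => α v - β v) k u = derivedForm α k u - derivedForm β k u := by
  rw [derivedForm, derivedForm, derivedForm, ← Finset.sum_sub_distrib]
  exact Finset.sum_congr rfl fun s _ => by ring

lemma derivedForm_comp_perm (α : V → ZMod p) (k : ℕ) (u : Fin k → V)
    (σ : Equiv.Perm (Fin k)) :
    derivedForm α k (u ∘ σ) = derivedForm α k u := by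
  rw [derivedForm, derivedForm]
  refine Finset.sum_nbij' (fun s => s.image σ) (fun s => s.image σ.symm) ?_ ?_ ?_ ?_ ?_
  · intro s hs
    simp only [Finset.mem_filter, Finset.mem_powerset] at hs ⊢
    exact ⟨Finset.subset_univ _, by simpa [Finset.image_eq_empty] using hs.2⟩
  · intro s hs
    simp only [Finset.mem_filter, Finset.mem_powerset] at hs ⊢
    exact ⟨Finset.subset_univ _, by simpa [Finset.image_eq_empty] using hs.2⟩
  · intro s _; simp [Finset.image_image]
  · intro s _; simp [Finset.image_image]
  · intro s _
    rw [Finset.card_image_of_injective _ σ.injective,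
      Finset.sum_image (fun a _ b _ h => σ.injective h)]
    rfl

lemma add_cons (γ : V → ZMod p) (m : ℕ)
    (H : ∀ u : Fin (m+2) → V, derivedForm γ (m+2) u = 0)
    (x y : V) (w : Fin m → V) :
    derivedForm γ (m+1) (Fin.cons (x+y) w)
      = derivedForm γ (m+1) (Fin.cons x w) + derivedForm γ (m+1) (Fin.cons y w) := by
  have h0 := H (Fin.cons x (Fin.cons y w))
  rw [derivedForm_cons, derivedForm_cons, derivedForm_cons] at h0
  have hxy : (fun z => (fun z' => γ (x + z')) (y + z)) = (fun z => γ (x + y + z)) := by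
    funext z; simp [add_assoc]
  rw [hxy] at h0
  rw [derivedForm_cons, derivedForm_cons, derivedForm_cons]
  simp only [pow_succ] at h0 ⊢
  linear_combination h0

lemma update_eq_cons_comp {m : ℕ} (u : Fin (m+1) → V) (i : Fin (m+1)) (z : V) :
    Function.update u i z
      = (Fin.cons z (fun j : Fin m => u (Equiv.swap 0 i j.succ))) ∘ (Equiv.swap 0 i) := by
  funext j
  rcases eq_or_ne j i with rfl | hj
  · simp only [Function.comp_apply, Function.update_self]
    have : Equiv.swap 0 j j = 0 := Equiv.swap_apply_right 0 j
    rw [this, Fin.cons_zero]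
  · rw [Function.update_of_ne hj]
    simp only [Function.comp_apply]
    have hne : Equiv.swap 0 i j ≠ 0 := by
      intro h
      apply hj
      have h2 := congrArg (Equiv.swap 0 i) h
      rwa [Equiv.swap_apply_self, Equiv.swap_apply_left] at h2
    obtain ⟨j', hj'⟩ := Fin.exists_succ_eq.2 hne
    rw [← hj', Fin.cons_succ, hj']
    simp

omit [Module (ZMod p) V] in
lemma vanish {d : ℕ} [Module (ZMod p) V] (e : Module.Basis (Fin d) (ZMod p) V) [NeZero p]
    (γ : V → ZMod p) (m : ℕ)
    (H : ∀ u : Fin (m+2) → V, derivedForm γ (m+2) u = 0)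
    (hb : ∀ idx : Fin (m+1) → Fin d, derivedForm γ (m+1) (fun i => e (idx i)) = 0)
    (u : Fin (m+1) → V) : derivedForm γ (m+1) u = 0 := by
  set f : (Fin (m+1) → V) → ZMod p := derivedForm γ (m+1) with hf
  have hadd : ∀ (u : Fin (m+1) → V) (i : Fin (m+1)) (x y : V),
      f (Function.update u i (x+y))
        = f (Function.update u i x) + f (Function.update u i y) := by
    intro u i x y
    rw [update_eq_cons_comp, update_eq_cons_comp, update_eq_cons_comp, hf,
      derivedForm_comp_perm, derivedForm_comp_perm, derivedForm_comp_perm]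
    exact add_cons γ m H x y _
  have hzero : ∀ (u : Fin (m+1) → V) (i : Fin (m+1)),
      f (Function.update u i 0) = 0 := by
    intro u i
    have h := hadd u i 0 0
    rw [add_zero] at h
    exact (add_eq_right.mp h.symm)
  have hsum : ∀ (u : Fin (m+1) → V) (i : Fin (m+1)) {ι : Type} [DecidableEq ι]
      (t : Finset ι) (g : ι → V),
      f (Function.update u i (∑ b ∈ t, g b)) = ∑ b ∈ t, f (Function.update u i (g b)) := by
    intro u i ι _ t g
    induction t using Finset.induction with
    | empty => simpa using hzero u i
    | insert _ _ hnot ih =>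
      rw [Finset.sum_insert hnot, Finset.sum_insert hnot, hadd, ih]
  have hnsmul : ∀ (u : Fin (m+1) → V) (i : Fin (m+1)) (c : ℕ) (x : V),
      f (Function.update u i (c • x)) = (c : ZMod p) * f (Function.update u i x) := by
    intro u i c x
    induction c with
    | zero => simpa using hzero u i
    | succ c ih =>
      rw [succ_nsmul, hadd, ih]
      push_cast
      ring
  have key : ∀ j : ℕ, ∀ u : Fin (m+1) → V,
      (∀ i : Fin (m+1), j ≤ (i : ℕ) → ∃ b, u i = e b) → f u = 0 := by
    intro j
    induction j with
    | zero =>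
      intro u hu
      choose idx hidx using fun i => hu i (Nat.zero_le _)
      have : u = fun i => e (idx i) := funext hidx
      rw [this]
      exact hb idx
    | succ j ih =>
      intro u hu
      by_cases hj : j < m + 1
      · set i₀ : Fin (m+1) := ⟨j, hj⟩ with hi₀
        have hrepr : u i₀ = ∑ b, (e.equivFun (u i₀) b).val • e b := by
          conv_lhs => rw [← e.sum_equivFun (u i₀)]
          exact Finset.sum_congr rfl fun b _ => by
            rw [← Nat.cast_smul_eq_nsmul (ZMod p), ZMod.natCast_val, ZMod.cast_id]
        have h1 : f u = f (Function.update u i₀ (u i₀)) := by rw [Function.update_eq_self]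
        rw [h1, hrepr, hsum]
        refine Finset.sum_eq_zero fun b _ => ?_
        rw [hnsmul]
        have h2 : f (Function.update u i₀ (e b)) = 0 := by
          apply ih
          intro i hi
          rcases eq_or_ne i i₀ with rfl | hne
          · exact ⟨b, by simp⟩
          · rw [Function.update_of_ne hne]
            apply hu
            have : (i : ℕ) ≠ j := fun h => hne (Fin.ext h)
            omega
        rw [h2, mul_zero]
      · apply ih
        intro i hi
        exact absurd (lt_of_le_of_lt hi i.isLt) (by omega)
  exact key (m+1) u fun i hi => absurd (lt_of_le_of_lt hi i.isLt) (by omega)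

end DFaux

/-- if `α, β : V → F_p` have combinatorial degree at most `n`
(their `(n+1)`-st derived forms vanish) and `α_k`, `β_k` agree on all
`k`-tuples of vectors from a basis of `V` for `1 ≤ k ≤ n`, then `α = β`. -/
theorem derivedForms_on_basis_determine_map {p : ℕ} (hp : p.Prime)
    (V : Type*) [AddCommGroup V] [Module (ZMod p) V]
    (d : ℕ) (e : Module.Basis (Fin d) (ZMod p) V)
    (n : ℕ) (α β : V → ZMod p)
    (hα : ∀ u : Fin (n + 1) → V, derivedForm α (n + 1) u = 0)
    (hβ : ∀ u : Fin (n + 1) → V, derivedForm β (n + 1) u = 0)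
    (hagree : ∀ k : ℕ, 1 ≤ k → k ≤ n → ∀ idx : Fin k → Fin d,
      derivedForm α k (fun i => e (idx i)) =
        derivedForm β k (fun i => e (idx i))) :
    α = β := by
  haveI : NeZero p := ⟨hp.ne_zero⟩
  set γ : V → ZMod p := fun v => α v - β v with hγ
  have Hn1 : ∀ u : Fin (n+1) → V, derivedForm γ (n+1) u = 0 := by
    intro u
    rw [hγ, DFaux.derivedForm_sub, hα, hβ, sub_zero]
  have hb : ∀ k : ℕ, 1 ≤ k → k ≤ n → ∀ idx : Fin k → Fin d,
      derivedForm γ k (fun i => e (idx i)) = 0 := by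
    intro k h1 h2 idx
    rw [hγ, DFaux.derivedForm_sub, hagree k h1 h2 idx, sub_self]
  have claim : ∀ j m : ℕ, m + 1 + j = n + 1 →
      ∀ u : Fin (m+1) → V, derivedForm γ (m+1) u = 0 := by
    intro j
    induction j with
    | zero =>
      intro m hm u
      have hmn : m = n := by omega
      subst hmn
      exact Hn1 u
    | succ j ih =>
      intro m hm u
      refine DFaux.vanish e γ m (fun u' => ?_) (hb (m+1) (by omega) (by omega)) u
      exact ih (m+1) (by omega) u'
  have h1 : ∀ u : Fin 1 → V, derivedForm γ 1 u = 0 := claim n 0 (by omega)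
  funext v
  have h2 := h1 (fun _ => v)
  rw [DFaux.derivedForm_one] at h2
  exact sub_eq_zero.mp h2
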